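/- Consider (2l+1)×(2l+1) matrices over 𝔽_q indexed by {0,1,…,l,−1,…,−l}. (1) For every λ ∈ 𝔽_q that is a nonzero square, the diagonal matrix diag(1,1,…,1,λ,1,…,1,λ⁻¹) (entry 1 at index 0, λ at index l, λ⁻¹ at index −l, and 1 elsewhere) lies in the subgroup of GL(2l+1,𝔽_q) generated by the B_l Chevalley generators. (2) One has the identity x_{l,0}(1)·x_{0,l}(−1)·x_{l,0}(1) = I − e_{−l,−l} − e_{−l,l} − e_{l,l} − 2e_{0,0} − e_{l,−l}, and multiplying this element by w_l yields diag(−1,1,…,1); hence diag(−1,1,…,1) lies in the subgroup generated by the B_l Chevalley generators together with w_l. -/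

import Mathlib

open Matrix

/-- Index set `{0, 1,…,l, -1,…,-l}` for `(2l+1) × (2l+1)` matrices:
`Sum.inl 0` is the index `0`, `Sum.inr (Sum.inl i)` is `i ∈ {1,…,l}` and
`Sum.inr (Sum.inr i)` is `-i`. -/
abbrev BIdx (l : ℕ) := Fin 1 ⊕ (Fin l ⊕ Fin l)

/-- The index `0`. -/
def bz (l : ℕ) : BIdx l := Sum.inl 0

/-- The index `i ∈ {1,…,l}`. -/
def bp {l : ℕ} (i : Fin l) : BIdx l := Sum.inr (Sum.inl i)

/-- The index `-i` for `i ∈ {1,…,l}`. -/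
def bm {l : ℕ} (i : Fin l) : BIdx l := Sum.inr (Sum.inr i)

/-- `e_{a,b}`: the square matrix with `1` in position `(a,b)` and `0` elsewhere. -/
def EE (K : Type*) [Field K] {n : Type*} [DecidableEq n] (a b : n) :
    Matrix n n K := Matrix.single a b 1

/-- The `B_l` Chevalley generators, as a set of invertible
`(2l+1) × (2l+1)` matrices. -/
def BlGens (K : Type*) [Field K] (l : ℕ) : Set (Matrix (BIdx l) (BIdx l) K)ˣ :=
  {u | ∃ t : K,
    (∃ i j : Fin l, i ≠ j ∧ (u : Matrix (BIdx l) (BIdx l) K) =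
      1 + t • (EE K (bp i) (bp j) - EE K (bm j) (bm i))) ∨
    (∃ i j : Fin l, i < j ∧ (u : Matrix (BIdx l) (BIdx l) K) =
      1 + t • (EE K (bp i) (bm j) - EE K (bp j) (bm i))) ∨
    (∃ i j : Fin l, i < j ∧ (u : Matrix (BIdx l) (BIdx l) K) =
      1 + t • (EE K (bm i) (bp j) - EE K (bm j) (bp i))) ∨
    (∃ i : Fin l, (u : Matrix (BIdx l) (BIdx l) K) =
      1 + t • ((2 : K) • EE K (bp i) (bz l) - EE K (bz l) (bm i))
        - t ^ 2 • EE K (bp i) (bm i)) ∨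
    (∃ i : Fin l, (u : Matrix (BIdx l) (BIdx l) K) =
      1 + t • (-((2 : K) • EE K (bm i) (bz l)) + EE K (bz l) (bp i))
        - t ^ 2 • EE K (bm i) (bp i))}

section Aux
variable (K : Type*) [Field K] {l : ℕ} (i : Fin l)

theorem EE_mul_same (a b d : BIdx l) : EE K a b * EE K b d = EE K a d := by
  simp [EE, single_mul_single_same]

theorem EE_mul_ne {b c : BIdx l} (a d : BIdx l) (h : b ≠ c) :
    EE K a b * EE K c d = 0 := by
  simp [EE, h]

theorem EE_zp (a d : BIdx l) : EE K a (bz l) * EE K (bp i) d = 0 :=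
  EE_mul_ne K a d (by simp [bz, bp])
theorem EE_zm (a d : BIdx l) : EE K a (bz l) * EE K (bm i) d = 0 :=
  EE_mul_ne K a d (by simp [bz, bm])
theorem EE_pz (a d : BIdx l) : EE K a (bp i) * EE K (bz l) d = 0 :=
  EE_mul_ne K a d (by simp [bz, bp])
theorem EE_mz (a d : BIdx l) : EE K a (bm i) * EE K (bz l) d = 0 :=
  EE_mul_ne K a d (by simp [bz, bm])
theorem EE_pm (a d : BIdx l) : EE K a (bp i) * EE K (bm i) d = 0 :=
  EE_mul_ne K a d (by simp [bp, bm])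
theorem EE_mp (a d : BIdx l) : EE K a (bm i) * EE K (bp i) d = 0 :=
  EE_mul_ne K a d (by simp [bp, bm])

/-- `x_{l,0}(t)` -/
def Xm (t : K) : Matrix (BIdx l) (BIdx l) K :=
  1 + t • ((2 : K) • EE K (bp i) (bz l) - EE K (bz l) (bm i)) - t ^ 2 • EE K (bp i) (bm i)

/-- `x_{0,l}(t)` -/
def Ym (t : K) : Matrix (BIdx l) (BIdx l) K :=
  1 + t • (-((2 : K) • EE K (bm i) (bz l)) + EE K (bz l) (bp i)) - t ^ 2 • EE K (bm i) (bp i)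

theorem Xm_mul (t t' : K) : Xm K i t * Xm K i t' = Xm K i (t + t') := by
  simp only [Xm, mul_add, add_mul, mul_sub, sub_mul, mul_one, one_mul,
    smul_mul_assoc, mul_smul_comm, smul_smul, neg_mul, mul_neg, neg_neg, smul_neg, neg_smul, smul_add, smul_sub, EE_mul_same, EE_zp, EE_zm, EE_pz,
    EE_mz, EE_pm, EE_mp, mul_zero, zero_mul, smul_zero, add_zero, zero_add,
    sub_zero, zero_sub, neg_zero]
  module
end Aux

section Aux2
variable (K : Type*) [Field K] {l : ℕ} (i : Fin l)

theorem w_eq (t : K) (ht : t ≠ 0) :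
    Xm K i t * Ym K i (-t⁻¹) * Xm K i t =
      1 - (2 : K) • EE K (bz l) (bz l) - EE K (bp i) (bp i) - EE K (bm i) (bm i)
        - t ^ 2 • EE K (bp i) (bm i) - t⁻¹ ^ 2 • EE K (bm i) (bp i) := by
  simp only [Xm, Ym, mul_add, add_mul, mul_sub, sub_mul, mul_one, one_mul,
    smul_mul_assoc, mul_smul_comm, smul_smul, neg_mul, mul_neg, neg_neg, smul_neg, neg_smul, smul_add, smul_sub, EE_mul_same, EE_zp, EE_zm, EE_pz,
    EE_mz, EE_pm, EE_mp, mul_zero, zero_mul, smul_zero, add_zero, zero_add,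
    sub_zero, zero_sub, neg_zero]
  match_scalars <;> field_simp <;> ring

theorem hprod (a b : K) :
    (1 - (2 : K) • EE K (bz l) (bz l) - EE K (bp i) (bp i) - EE K (bm i) (bm i)
        - a • EE K (bp i) (bm i) - b • EE K (bm i) (bp i)) *
      (1 - (2 : K) • EE K (bz l) (bz l) - EE K (bp i) (bp i) - EE K (bm i) (bm i)
        - EE K (bp i) (bm i) - EE K (bm i) (bp i)) =
      1 + (a - 1) • EE K (bp i) (bp i) + (b - 1) • EE K (bm i) (bm i) := by
  simp only [mul_add, add_mul, mul_sub, sub_mul, mul_one, one_mul,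
    smul_mul_assoc, mul_smul_comm, smul_smul, neg_mul, mul_neg, neg_neg, smul_neg, neg_smul, smul_add, smul_sub, EE_mul_same, EE_zp, EE_zm, EE_pz,
    EE_mz, EE_pm, EE_mp, mul_zero, zero_mul, smul_zero, add_zero, zero_add,
    sub_zero, zero_sub, neg_zero]
  module

theorem wJ : Xm K i 1 * Ym K i (-1) * Xm K i 1 =
    1 - (2 : K) • EE K (bz l) (bz l) - EE K (bp i) (bp i) - EE K (bm i) (bm i)
      - EE K (bp i) (bm i) - EE K (bm i) (bp i) := by
  rw [show (-1 : K) = -(1 : K)⁻¹ by norm_num, w_eq K i 1 one_ne_zero]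
  norm_num

theorem J_mul_wl :
    (1 - (2 : K) • EE K (bz l) (bz l) - EE K (bp i) (bp i) - EE K (bm i) (bm i)
        - EE K (bp i) (bm i) - EE K (bm i) (bp i)) *
      (1 - EE K (bp i) (bp i) - EE K (bm i) (bm i) - EE K (bp i) (bm i)
        - EE K (bm i) (bp i)) =
      1 - (2 : K) • EE K (bz l) (bz l) := by
  simp only [mul_add, add_mul, mul_sub, sub_mul, mul_one, one_mul,
    smul_mul_assoc, mul_smul_comm, smul_smul, neg_mul, mul_neg, neg_neg, smul_neg, neg_smul, smul_add, smul_sub, EE_mul_same, EE_zp, EE_zm, EE_pz,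
    EE_mz, EE_pm, EE_mp, mul_zero, zero_mul, smul_zero, add_zero, zero_add,
    sub_zero, zero_sub, neg_zero]
  module

theorem wl_invol :
    (1 - EE K (bp i) (bp i) - EE K (bm i) (bm i) - EE K (bp i) (bm i)
        - EE K (bm i) (bp i)) *
      (1 - EE K (bp i) (bp i) - EE K (bm i) (bm i) - EE K (bp i) (bm i)
        - EE K (bm i) (bp i)) = 1 := by
  simp only [mul_add, add_mul, mul_sub, sub_mul, mul_one, one_mul,
    smul_mul_assoc, mul_smul_comm, smul_smul, neg_mul, mul_neg, neg_neg, smul_neg, neg_smul, smul_add, smul_sub, EE_mul_same, EE_zp, EE_zm, EE_pz,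
    EE_mz, EE_pm, EE_mp, mul_zero, zero_mul, smul_zero, add_zero, zero_add,
    sub_zero, zero_sub, neg_zero]
  module

theorem Ym_mul (t t' : K) : Ym K i t * Ym K i t' = Ym K i (t + t') := by
  simp only [Ym, mul_add, add_mul, mul_sub, sub_mul, mul_one, one_mul,
    smul_mul_assoc, mul_smul_comm, smul_smul, neg_mul, mul_neg, neg_neg, smul_neg, neg_smul, smul_add, smul_sub, EE_mul_same, EE_zp, EE_zm, EE_pz,
    EE_mz, EE_pm, EE_mp, mul_zero, zero_mul, smul_zero, add_zero, zero_add,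
    sub_zero, zero_sub, neg_zero]
  module

theorem Xm_zero : Xm K i (0 : K) = 1 := by norm_num [Xm]
theorem Ym_zero : Ym K i (0 : K) = 1 := by norm_num [Ym]

/-- `x_{l,0}(t)` as a unit. -/
def Xu (t : K) : (Matrix (BIdx l) (BIdx l) K)ˣ :=
  ⟨Xm K i t, Xm K i (-t),
    by rw [Xm_mul, add_neg_cancel, Xm_zero],
    by rw [Xm_mul, neg_add_cancel, Xm_zero]⟩

/-- `x_{0,l}(t)` as a unit. -/
def Yu (t : K) : (Matrix (BIdx l) (BIdx l) K)ˣ :=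
  ⟨Ym K i t, Ym K i (-t),
    by rw [Ym_mul, add_neg_cancel, Ym_zero],
    by rw [Ym_mul, neg_add_cancel, Ym_zero]⟩

end Aux2

section D
variable (K : Type*) [Field K] {l : ℕ}

theorem fin_eq_iff (lst : Fin l) (hlst : (lst : ℕ) = l - 1) (a : Fin l) :
    ((a : ℕ) = l - 1) ↔ a = lst := by
  rw [Fin.ext_iff, hlst]

theorem diag_eq (lst : Fin l) (hlst : (lst : ℕ) = l - 1) (lam mu : K) :
    Matrix.diagonal (Sum.elim (fun _ : Fin 1 => (1 : K)) (Sum.elim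
      (fun i : Fin l => if (i : ℕ) = l - 1 then lam else 1)
      (fun i : Fin l => if (i : ℕ) = l - 1 then mu else 1))) =
    1 + (lam - 1) • EE K (bp lst) (bp lst) + (mu - 1) • EE K (bm lst) (bm lst) := by
  ext a b
  simp only [Matrix.diagonal_apply, Matrix.add_apply, Matrix.smul_apply,
    Matrix.one_apply, EE, Matrix.single, bp, bm, of_apply, smul_eq_mul]
  rcases a with a | a | a <;> rcases b with b | b | b <;>
    simp_all [fin_eq_iff lst hlst, Sum.elim]
  all_goals
    rcases eq_or_ne a b with rfl | hab
  · by_cases h : a = lst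
    · simp [h]
    · rw [if_neg h, if_neg (show ¬(lst = a ∧ lst = a) from fun hh => h hh.1.symm)]
      simp
  · rw [if_neg (show ¬(lst = a ∧ lst = b) from by rintro ⟨rfl, rfl⟩; exact hab rfl)]
    simp [hab]
  · by_cases h : a = lst
    · simp [h]
    · rw [if_neg h, if_neg (show ¬(lst = a ∧ lst = a) from fun hh => h hh.1.symm)]
      simp
  · rw [if_neg (show ¬(lst = a ∧ lst = b) from by rintro ⟨rfl, rfl⟩; exact hab rfl)]
    simp [hab]

theorem diag_negone :
    Matrix.diagonal (Sum.elim (fun _ : Fin 1 => (-1 : K))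
      (Sum.elim (fun _ : Fin l => (1 : K)) (fun _ : Fin l => (1 : K)))) =
    1 - (2 : K) • EE K (bz l) (bz l) := by
  ext a b
  simp only [Matrix.diagonal_apply, Matrix.sub_apply, Matrix.smul_apply,
    Matrix.one_apply, EE, Matrix.single, bz, of_apply, smul_eq_mul]
  rcases a with a | a | a <;> rcases b with b | b | b <;>
    simp_all [Sum.elim]
  · have h0 : (0 : Fin 1) = a := Subsingleton.elim _ _
    simp [Subsingleton.elim b a, ← h0]
    norm_num
  all_goals rcases eq_or_ne a b with rfl | hab <;> simp_all
end D


section Aux3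
variable (K : Type*) [Field K] {l : ℕ} (i : Fin l)

@[simp] theorem Xu_val (t : K) : (Xu K i t : Matrix (BIdx l) (BIdx l) K) = Xm K i t := rfl
@[simp] theorem Yu_val (t : K) : (Yu K i t : Matrix (BIdx l) (BIdx l) K) = Ym K i t := rfl

end Aux3

/-- (1) for every nonzero square `λ`, the diagonal matrix
`diag(1,1,…,1,λ,1,…,1,λ⁻¹)` is a product of `B_l` Chevalley generators;
(2) `x_{l,0}(1)·x_{0,l}(-1)·x_{l,0}(1) = I - e_{-l,-l} - e_{-l,l} - e_{l,l}
- 2e_{0,0} - e_{l,-l}`, multiplying it by `w_l` yields `diag(-1,1,…,1)`, and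
hence `diag(-1,1,…,1)` lies in the subgroup generated by the `B_l` Chevalley
generators together with `w_l`. -/
theorem stmt_10 (K : Type*) [Field K] [Fintype K] (hchar : ringChar K ≠ 2)
    (l : ℕ) (hl : 2 ≤ l) (lst : Fin l) (hlst : (lst : ℕ) = l - 1)
    (wl : Matrix (BIdx l) (BIdx l) K)
    (hwl : wl = 1 - EE K (bp lst) (bp lst) - EE K (bm lst) (bm lst)
      - EE K (bp lst) (bm lst) - EE K (bm lst) (bp lst)) :
    (∀ lam t : K, t ≠ 0 → lam = t ^ 2 →
      ∃ u ∈ Subgroup.closure (BlGens K l),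
        (u : Matrix (BIdx l) (BIdx l) K) =
          Matrix.diagonal (Sum.elim (fun _ : Fin 1 => (1 : K)) (Sum.elim
            (fun i : Fin l => if (i : ℕ) = l - 1 then lam else 1)
            (fun i : Fin l => if (i : ℕ) = l - 1 then lam⁻¹ else 1)))) ∧
    ((1 + (1 : K) • ((2 : K) • EE K (bp lst) (bz l) - EE K (bz l) (bm lst))
        - ((1 : K) ^ 2) • EE K (bp lst) (bm lst)) *
      (1 + (-1 : K) • (-((2 : K) • EE K (bm lst) (bz l)) + EE K (bz l) (bp lst))
        - ((-1 : K) ^ 2) • EE K (bm lst) (bp lst)) *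
      (1 + (1 : K) • ((2 : K) • EE K (bp lst) (bz l) - EE K (bz l) (bm lst))
        - ((1 : K) ^ 2) • EE K (bp lst) (bm lst)) =
      1 - EE K (bm lst) (bm lst) - EE K (bm lst) (bp lst) - EE K (bp lst) (bp lst)
        - (2 : K) • EE K (bz l) (bz l) - EE K (bp lst) (bm lst)) ∧
    ((1 - EE K (bm lst) (bm lst) - EE K (bm lst) (bp lst) - EE K (bp lst) (bp lst)
        - (2 : K) • EE K (bz l) (bz l) - EE K (bp lst) (bm lst)) * wl =
      Matrix.diagonal (Sum.elim (fun _ : Fin 1 => (-1 : K))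
        (Sum.elim (fun _ : Fin l => (1 : K)) (fun _ : Fin l => (1 : K))))) ∧
    (∃ u ∈ Subgroup.closure (BlGens K l ∪
        {v : (Matrix (BIdx l) (BIdx l) K)ˣ | (v : Matrix (BIdx l) (BIdx l) K) = wl}),
      (u : Matrix (BIdx l) (BIdx l) K) =
        Matrix.diagonal (Sum.elim (fun _ : Fin 1 => (-1 : K))
          (Sum.elim (fun _ : Fin l => (1 : K)) (fun _ : Fin l => (1 : K))))) := by
  subst hwl
  have hX : ∀ s : K, Xu K lst s ∈ Subgroup.closure (BlGens K l) := fun s =>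
    Subgroup.subset_closure ⟨s, Or.inr (Or.inr (Or.inr (Or.inl ⟨lst, rfl⟩)))⟩
  have hY : ∀ s : K, Yu K lst s ∈ Subgroup.closure (BlGens K l) := fun s =>
    Subgroup.subset_closure ⟨s, Or.inr (Or.inr (Or.inr (Or.inr ⟨lst, rfl⟩)))⟩
  refine ⟨?_, ?_, ?_, ?_⟩
  · intro lam t ht hlam
    refine ⟨Xu K lst t * Yu K lst (-t⁻¹) * Xu K lst t *
      (Xu K lst 1 * Yu K lst (-1) * Xu K lst 1), ?_, ?_⟩
    · exact mul_mem (mul_mem (mul_mem (hX t) (hY _)) (hX t))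
        (mul_mem (mul_mem (hX 1) (hY _)) (hX 1))
    · simp only [Units.val_mul, Xu_val, Yu_val]
      rw [w_eq K lst t ht, wJ, hprod, diag_eq K lst hlst]
      subst hlam
      rw [← inv_pow]
  · show Xm K lst 1 * Ym K lst (-1) * Xm K lst 1 = _
    rw [wJ]
    module
  · have h1 : (1 - EE K (bm lst) (bm lst) - EE K (bm lst) (bp lst)
        - EE K (bp lst) (bp lst) - (2 : K) • EE K (bz l) (bz l)
        - EE K (bp lst) (bm lst)) =
        1 - (2 : K) • EE K (bz l) (bz l) - EE K (bp lst) (bp lst)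
          - EE K (bm lst) (bm lst) - EE K (bp lst) (bm lst)
          - EE K (bm lst) (bp lst) := by module
    rw [h1, J_mul_wl, diag_negone]
  · refine ⟨(Xu K lst 1 * Yu K lst (-1) * Xu K lst 1) *
      ⟨_, _, wl_invol K lst, wl_invol K lst⟩, ?_, ?_⟩
    · refine mul_mem ?_ (Subgroup.subset_closure (Set.mem_union_right _ rfl))
      refine Subgroup.closure_mono Set.subset_union_left ?_
      exact mul_mem (mul_mem (hX 1) (hY _)) (hX 1)
    · simp only [Units.val_mul, Xu_val, Yu_val]
      rw [wJ]
      show _ * (1 - EE K (bp lst) (bp lst) - EE K (bm lst) (bm lst)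
        - EE K (bp lst) (bm lst) - EE K (bm lst) (bp lst)) = _
      rw [J_mul_wl, diag_negone]
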